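/- Let p be an odd prime, v an n-dimensional integer vector each of whose entries is nonzero modulo p, and c₁ an integer with 1 ≤ c₁ ≤ p−1. If u₁ and u₂ are two distinct perfect p-representatives of c₁·v, then u₁ᵀu₂ = 0. -/

import Mathlib

open Matrix BigOperators

/-- An adjacency matrix: a symmetric 0-1 integer matrix with zero diagonal. -/
def IsAdjacencyMat {n : ℕ} (A : Matrix (Fin n) (Fin n) ℤ) : Prop :=
  A.IsSymm ∧ (∀ i j, A i j = 0 ∨ A i j = 1) ∧ (∀ i, A i i = 0)

/-- The walk matrix W = [e, Ae, ..., A^{n-1}e]. -/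
def walkMatrix {n : ℕ} (A : Matrix (Fin n) (Fin n) ℤ) : Matrix (Fin n) (Fin n) ℤ :=
  Matrix.of fun i j => ((A ^ (j : ℕ)) *ᵥ fun _ => (1 : ℤ)) i

/-- The all-ones matrix J. -/
def allOnes (n : ℕ) : Matrix (Fin n) (Fin n) ℤ := Matrix.of fun _ _ => 1

/-- Two symmetric integer matrices are generalized cospectral if they are cospectral and
their "complements" J - I - · are cospectral. -/
def GenCospectral {n : ℕ} (A B : Matrix (Fin n) (Fin n) ℤ) : Prop :=
  A.charpoly = B.charpoly ∧ (allOnes n - 1 - A).charpoly = (allOnes n - 1 - B).charpoly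

/-- Two (adjacency) matrices are isomorphic if Pᵀ A P = B for some permutation matrix P. -/
def IsomorphicMat {n : ℕ} (A B : Matrix (Fin n) (Fin n) ℤ) : Prop :=
  ∃ σ : Equiv.Perm (Fin n),
    (σ.toPEquiv.toMatrix : Matrix (Fin n) (Fin n) ℤ)ᵀ * A * σ.toPEquiv.toMatrix = B

/-- A graph (given by its adjacency matrix) is determined by its generalized spectrum. -/
def IsDGS {n : ℕ} (A : Matrix (Fin n) (Fin n) ℤ) : Prop :=
  ∀ B : Matrix (Fin n) (Fin n) ℤ, IsAdjacencyMat B → GenCospectral A B → IsomorphicMat A B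

/-- Membership in the family F_n^p : det W = ±2^⌊n/2⌋ p² b with b odd square-free positive,
p ∤ b, and rank of W over ℤ/pℤ equals n - 1. -/
def MemF {n : ℕ} (p : ℕ) (A : Matrix (Fin n) (Fin n) ℤ) : Prop :=
  IsAdjacencyMat A ∧
  (∃ b : ℤ, 0 < b ∧ Odd b ∧ Squarefree b ∧ ¬ ((p : ℤ) ∣ b) ∧
    ((walkMatrix A).det = 2 ^ (n / 2) * (p : ℤ) ^ 2 * b ∨
     (walkMatrix A).det = -(2 ^ (n / 2) * (p : ℤ) ^ 2 * b))) ∧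
  ((walkMatrix A).map (Int.cast : ℤ → ZMod p)).rank = n - 1

/-- A regular orthogonal matrix: QᵀQ = I and Qe = e. -/
def IsRegularOrthogonal {n : ℕ} (Q : Matrix (Fin n) (Fin n) ℚ) : Prop :=
  Qᵀ * Q = 1 ∧ (Q *ᵥ fun _ => (1 : ℚ)) = fun _ => 1

/-- The level of a rational matrix Q is the smallest positive integer k
such that kQ is an integer matrix. -/
def HasLevel {n : ℕ} (Q : Matrix (Fin n) (Fin n) ℚ) (ℓ : ℕ) : Prop :=
  IsLeast {k : ℕ | 0 < k ∧ ∀ i j, ∃ m : ℤ, (k : ℚ) * Q i j = (m : ℚ)} ℓ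

/-- A primitive matrix: a regular rational orthogonal matrix of level p such that
the integer matrix pQ has rank 1 over ℤ/pℤ. -/
def IsPrimitiveMat {n : ℕ} (p : ℕ) (Q : Matrix (Fin n) (Fin n) ℚ) : Prop :=
  IsRegularOrthogonal Q ∧ HasLevel Q p ∧
  ∃ M : Matrix (Fin n) (Fin n) ℤ,
    M.map (Int.cast : ℤ → ℚ) = (p : ℚ) • Q ∧
    (M.map (Int.cast : ℤ → ZMod p)).rank = 1

/-- A primitive matrix Q is generated from an integer vector v if every column of the
integer matrix pQ is congruent modulo p to an integer multiple of v. -/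
def GeneratedFrom {n : ℕ} (p : ℕ) (Q : Matrix (Fin n) (Fin n) ℚ) (v : Fin n → ℤ) : Prop :=
  IsPrimitiveMat p Q ∧
  ∀ M : Matrix (Fin n) (Fin n) ℤ, M.map (Int.cast : ℤ → ℚ) = (p : ℚ) • Q →
    ∀ j, ∃ c : ℤ, ∀ i, ((M i j : ℤ) : ZMod p) = (c : ZMod p) * ((v i : ℤ) : ZMod p)

/-- w is a perfect p-representative of v: w ≡ v (mod p), wᵀe = p and wᵀw = p². -/
def IsPerfectRep {n : ℕ} (p : ℕ) (v w : Fin n → ℤ) : Prop :=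
  (∀ i, ((w i : ℤ) : ZMod p) = ((v i : ℤ) : ZMod p)) ∧
  (∑ i, w i) = (p : ℤ) ∧ (∑ i, w i * w i) = (p : ℤ) ^ 2

/-- u is the shortest p-representative of v: u ≡ v (mod p) and |uᵢ| ≤ (p-1)/2 for all i. -/
def IsShortestRep {n : ℕ} (p : ℕ) (v u : Fin n → ℤ) : Prop :=
  (∀ i, ((u i : ℤ) : ZMod p) = ((v i : ℤ) : ZMod p)) ∧ ∀ i, |u i| ≤ ((p : ℤ) - 1) / 2

theorem stmt13 (n p : ℕ) (hp : p.Prime) (hpodd : Odd p)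
    (v : Fin n → ℤ) (hv : ∀ i, ((v i : ℤ) : ZMod p) ≠ 0)
    (c₁ : ℤ) (hc₁ : 1 ≤ c₁) (hc₁' : c₁ ≤ (p : ℤ) - 1)
    (u₁ u₂ : Fin n → ℤ)
    (h₁ : IsPerfectRep p (fun i => c₁ * v i) u₁)
    (h₂ : IsPerfectRep p (fun i => c₁ * v i) u₂)
    (hne : u₁ ≠ u₂) :
    (∑ i, u₁ i * u₂ i) = 0 := by
  obtain ⟨hc1, hs1, hq1⟩ := h₁
  obtain ⟨hc2, hs2, hq2⟩ := h₂
  set S : ℤ := ∑ i, u₁ i * u₂ i with hS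
  have hpz : (0:ℤ) < (p:ℤ) := by exact_mod_cast hp.pos
  -- p divides each difference
  have hdvd : ∀ i, (p:ℤ) ∣ (u₁ i - u₂ i) := by
    intro i
    have : ((u₁ i - u₂ i : ℤ) : ZMod p) = 0 := by
      push_cast
      rw [hc1 i, hc2 i]; ring
    exact (ZMod.intCast_zmod_eq_zero_iff_dvd _ _).mp this
  have hdvd2 : ((p:ℤ)^2) ∣ ∑ i, (u₁ i - u₂ i)^2 := by
    apply Finset.dvd_sum
    intro i _
    exact pow_dvd_pow_of_dvd (hdvd i) 2
  have e1 : ∑ i, (u₁ i - u₂ i)^2 = (p:ℤ)^2 + (p:ℤ)^2 - 2 * S := by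
    have : ∑ i, (u₁ i - u₂ i)^2
        = (∑ i, u₁ i * u₁ i) + (∑ i, u₂ i * u₂ i) - 2 * ∑ i, u₁ i * u₂ i := by
      rw [← Finset.sum_add_distrib, Finset.mul_sum, ← Finset.sum_sub_distrib]
      apply Finset.sum_congr rfl
      intros; ring
    rw [this, hq1, hq2]
  have e2 : ∑ i, (u₁ i + u₂ i)^2 = (p:ℤ)^2 + (p:ℤ)^2 + 2 * S := by
    have : ∑ i, (u₁ i + u₂ i)^2
        = (∑ i, u₁ i * u₁ i) + (∑ i, u₂ i * u₂ i) + 2 * ∑ i, u₁ i * u₂ i := by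
      rw [← Finset.sum_add_distrib, Finset.mul_sum, ← Finset.sum_add_distrib]
      apply Finset.sum_congr rfl
      intros; ring
    rw [this, hq1, hq2]
  -- p^2 divides 2S hence S
  have hdvd2S : ((p:ℤ)^2) ∣ 2 * S := by
    have h := hdvd2
    rw [e1] at h
    have h' : ((p:ℤ)^2) ∣ (p:ℤ)^2 + (p:ℤ)^2 := ⟨2, by ring⟩
    have := dvd_sub h' h
    convert this using 1
    · rfl
    ring
  have hcop : IsCoprime ((p:ℤ)^2) (2:ℤ) := by
    apply IsCoprime.pow_left
    rw [Int.isCoprime_iff_gcd_eq_one]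
    have h2 : Nat.Coprime 2 p := Nat.coprime_two_left.mpr hpodd
    simpa [Int.gcd] using h2.symm
  have hdvdS : ((p:ℤ)^2) ∣ S := hcop.dvd_of_dvd_mul_left hdvd2S
  obtain ⟨m, hm⟩ := hdvdS
  -- bounds on m from nonnegativity of sums of squares
  have hnn1 : (0:ℤ) ≤ ∑ i, (u₁ i - u₂ i)^2 :=
    Finset.sum_nonneg fun i _ => sq_nonneg _
  have hnn2 : (0:ℤ) ≤ ∑ i, (u₁ i + u₂ i)^2 :=
    Finset.sum_nonneg fun i _ => sq_nonneg _
  rw [e1, hm] at hnn1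
  rw [e2, hm] at hnn2
  have hp2 : (0:ℤ) < (p:ℤ)^2 := by positivity
  have hmle : m ≤ 1 := by nlinarith
  have hmge : -1 ≤ m := by nlinarith
  interval_cases m
  · -- m = -1 : u₁ = -u₂, contradiction with sums
    exfalso
    have hz : ∑ i, (u₁ i + u₂ i)^2 = 0 := by rw [e2, hm]; ring
    have hall : ∀ i ∈ Finset.univ, (u₁ i + u₂ i)^2 = 0 :=
      (Finset.sum_eq_zero_iff_of_nonneg fun i _ => sq_nonneg _).mp hz
    have hsum0 : ∑ i, (u₁ i + u₂ i) = 0 :=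
      Finset.sum_eq_zero fun i _ => by
        have := hall i (Finset.mem_univ i); nlinarith [this]
    rw [Finset.sum_add_distrib, hs1, hs2] at hsum0
    omega
  · rw [hm]; ring
  · -- m = 1 : u₁ = u₂, contradiction
    exfalso
    apply hne
    have hz : ∑ i, (u₁ i - u₂ i)^2 = 0 := by rw [e1, hm]; ring
    have hall : ∀ i ∈ Finset.univ, (u₁ i - u₂ i)^2 = 0 :=
      (Finset.sum_eq_zero_iff_of_nonneg fun i _ => sq_nonneg _).mp hz
    funext i
    have := hall i (Finset.mem_univ i)
    nlinarith [this]
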